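/- Let K, H, θ be real numbers with D := K·sin²θ - H·sin(2θ) + 1 ≠ 0. Define K^θ = (K·cos(2θ) + 2H·sin(2θ))/D and H^θ = (K·sinθ·cosθ - H·cos(2θ))/D. If tan(2θ) = 1/H (with H ≠ 0, cos(2θ) ≠ 0), then K^θ = cot²θ - 1 provided sinθ ≠ 0; and if tan²θ = 1/(K+1) (with K+1 > 0, cosθ ≠ 0), then H^θ = cot(2θ). -/

import Mathlib

open Real

theorem parallel_surface_curvatures (K H θ : ℝ)
    (hD : K * Real.sin θ ^ 2 - H * Real.sin (2 * θ) + 1 ≠ 0) :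
    (H ≠ 0 → Real.cos (2 * θ) ≠ 0 → Real.tan (2 * θ) = 1 / H → Real.sin θ ≠ 0 →
      (K * Real.cos (2 * θ) + 2 * H * Real.sin (2 * θ)) /
        (K * Real.sin θ ^ 2 - H * Real.sin (2 * θ) + 1)
        = (Real.cos θ / Real.sin θ) ^ 2 - 1) ∧
    (K + 1 > 0 → Real.cos θ ≠ 0 → Real.tan θ ^ 2 = 1 / (K + 1) →
      (K * Real.sin θ * Real.cos θ - H * Real.cos (2 * θ)) /
        (K * Real.sin θ ^ 2 - H * Real.sin (2 * θ) + 1)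
        = Real.cos (2 * θ) / Real.sin (2 * θ)) := by
  have hpy := Real.sin_sq_add_cos_sq θ
  have hs2 : Real.sin (2 * θ) = 2 * Real.sin θ * Real.cos θ := Real.sin_two_mul θ
  have hc2 : Real.cos (2 * θ) = 2 * Real.cos θ ^ 2 - 1 := Real.cos_two_mul θ
  constructor
  · intro hH hcne htan hs
    have h1 : H * Real.sin (2 * θ) = Real.cos (2 * θ) := by
      rw [Real.tan_eq_sin_div_cos] at htan
      field_simp at htan
      linarith [htan]
    have hcc : Real.cos (2 * θ) = 1 - 2 * Real.sin θ ^ 2 := by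
      rw [hc2]; nlinarith [hpy]
    have hDeq : K * Real.sin θ ^ 2 - H * Real.sin (2 * θ) + 1
        = (K + 2) * Real.sin θ ^ 2 := by
      rw [← h1] at hcc; linarith [hcc]
    rw [hDeq] at hD ⊢
    have hK2 : K + 2 ≠ 0 := fun h => hD (by rw [h]; ring)
    field_simp
    linear_combination (2) * h1 + ((K + 2)) * hcc
      - ((K + 2)) * hpy
  · intro hK hc htan
    have h2 : (K + 1) * Real.sin θ ^ 2 = Real.cos θ ^ 2 := by
      rw [Real.tan_eq_sin_div_cos] at htan
      rw [div_pow, div_eq_div_iff (by positivity) (by positivity)] at htan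
      linarith [htan]
    have hsne : Real.sin θ ≠ 0 := by
      intro h
      apply hc
      have : Real.cos θ ^ 2 = 0 := by rw [← h2, h]; ring
      exact pow_eq_zero_iff (by norm_num) |>.mp this
    have hs2ne : Real.sin (2 * θ) ≠ 0 := by
      rw [hs2]; exact mul_ne_zero (mul_ne_zero two_ne_zero hsne) hc
    rw [div_eq_div_iff hD hs2ne]
    linear_combination (K * Real.sin θ * Real.cos θ) * hs2
      - (K * Real.sin θ ^ 2) * hc2 + h2 - hpy - hc2
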